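/- If g is a complex one-loop fixed point on ℂ^N, then for every vector φ ∈ ℂ^N the quantity V(φ) = ∑_{i,j,k,l} g_{ijkl} · conj(φ_i) · conj(φ_j) · φ_k · φ_l is a nonnegative real number (its imaginary part vanishes and its real part is ≥ 0). -/

import Mathlib

/-- `(g ♭ h)_{ijkl} = ∑_{m,n} g_{ijmn} h_{mnkl}`. -/
noncomputable def cflat {N : ℕ} (g h : Fin N → Fin N → Fin N → Fin N → ℂ) :
    Fin N → Fin N → Fin N → Fin N → ℂ :=
  fun i j k l => ∑ m : Fin N, ∑ n : Fin N, g i j m n * h m n k l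

/-- `(g ♯ h)_{ijkl} = ∑_{m,n} g_{imkn} h_{jnlm}`. -/
noncomputable def csharp {N : ℕ} (g h : Fin N → Fin N → Fin N → Fin N → ℂ) :
    Fin N → Fin N → Fin N → Fin N → ℂ :=
  fun i j k l => ∑ m : Fin N, ∑ n : Fin N, g i m k n * h j n l m

/-- `P(A)_{ijkl} = (A_{ijkl} + A_{jikl} + A_{ijlk} + A_{jilk})/4`. -/
noncomputable def cP {N : ℕ} (A : Fin N → Fin N → Fin N → Fin N → ℂ) :
    Fin N → Fin N → Fin N → Fin N → ℂ :=
  fun i j k l => (A i j k l + A j i k l + A i j l k + A j i l k) / 4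

/-- `‖g‖² = ∑_{i,j,k,l} |g_{ijkl}|²`. -/
noncomputable def csqnorm {N : ℕ} (g : Fin N → Fin N → Fin N → Fin N → ℂ) : ℝ :=
  ∑ i : Fin N, ∑ j : Fin N, ∑ k : Fin N, ∑ l : Fin N, ‖g i j k l‖ ^ 2

/-- A complex quartic coupling on `ℂ^N`: symmetric under `i ↔ j` and `k ↔ l`,
and satisfying the reality condition `conj g_{ijkl} = g_{klij}`. -/
def IsCplxCoupling {N : ℕ} (g : Fin N → Fin N → Fin N → Fin N → ℂ) : Prop :=
  (∀ i j k l, g i j k l = g j i k l) ∧ (∀ i j k l, g i j k l = g i j l k) ∧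
    (∀ i j k l, (starRingEnd ℂ) (g i j k l) = g k l i j)

/-- The complex one-loop fixed point equation `g = P(g ♭ g + 4 g ♯ g)`. -/
def IsCplxFixedPoint {N : ℕ} (g : Fin N → Fin N → Fin N → Fin N → ℂ) : Prop :=
  IsCplxCoupling g ∧
    ∀ i j k l, g i j k l =
      cP (fun a b c d => cflat g g a b c d + 4 * csharp g g a b c d) i j k l

open Finset

private lemma sum6_comm {M : Type*} [AddCommMonoid M] {N : ℕ}
    (f : Fin N → Fin N → Fin N → Fin N → Fin N → Fin N → M) :
    ∑ i : Fin N, ∑ j : Fin N, ∑ k : Fin N, ∑ l : Fin N, ∑ m : Fin N, ∑ n : Fin N, f i j k l m n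
      = ∑ m : Fin N, ∑ n : Fin N, ∑ i : Fin N, ∑ j : Fin N, ∑ k : Fin N, ∑ l : Fin N,
          f i j k l m n := by
  conv_lhs => enter [2, i, 2, j, 2, k]; rw [Finset.sum_comm]
  conv_lhs => enter [2, i, 2, j]; rw [Finset.sum_comm]
  conv_lhs => enter [2, i]; rw [Finset.sum_comm]
  rw [Finset.sum_comm]
  conv_lhs => enter [2, m, 2, i, 2, j, 2, k]; rw [Finset.sum_comm]
  conv_lhs => enter [2, m, 2, i, 2, j]; rw [Finset.sum_comm]
  conv_lhs => enter [2, m, 2, i]; rw [Finset.sum_comm]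
  conv_lhs => enter [2, m]; rw [Finset.sum_comm]

private lemma sum4_perm {M : Type*} [AddCommMonoid M] {N : ℕ}
    (f : Fin N → Fin N → Fin N → Fin N → M) :
    ∑ a : Fin N, ∑ b : Fin N, ∑ c : Fin N, ∑ d : Fin N, f a b c d
      = ∑ b : Fin N, ∑ d : Fin N, ∑ a : Fin N, ∑ c : Fin N, f a b c d := by
  rw [Finset.sum_comm]
  conv_lhs => enter [2, b, 2, a]; rw [Finset.sum_comm]
  conv_lhs => enter [2, b]; rw [Finset.sum_comm]

private lemma conj_mul_self (z : ℂ) : (starRingEnd ℂ) z * z = (Complex.normSq z : ℝ) := by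
  rw [mul_comm]; exact Complex.mul_conj z


/-- at a complex one-loop fixed point, the potential
`V(φ) = ∑ g_{ijkl} conj(φ_i) conj(φ_j) φ_k φ_l` is a nonnegative real number for
every `φ ∈ ℂ^N`. -/
theorem cplxFixedPoint_potential_nonneg {N : ℕ} (hN : 1 ≤ N)
    (g : Fin N → Fin N → Fin N → Fin N → ℂ) (hfp : IsCplxFixedPoint g)
    (φ : Fin N → ℂ) :
    (∑ i : Fin N, ∑ j : Fin N, ∑ k : Fin N, ∑ l : Fin N,
        g i j k l * (starRingEnd ℂ) (φ i) * (starRingEnd ℂ) (φ j)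
          * φ k * φ l).im = 0 ∧
      0 ≤ (∑ i : Fin N, ∑ j : Fin N, ∑ k : Fin N, ∑ l : Fin N,
        g i j k l * (starRingEnd ℂ) (φ i) * (starRingEnd ℂ) (φ j)
          * φ k * φ l).re := by
  obtain ⟨⟨h1, h2, h3⟩, hfix⟩ := hfp
  set B : Fin N → Fin N → ℂ :=
    fun m n => ∑ k : Fin N, ∑ l : Fin N, g m n k l * φ k * φ l with hB
  set C : Fin N → Fin N → ℂ :=
    fun m n => ∑ i : Fin N, ∑ k : Fin N, g i m k n * (starRingEnd ℂ) (φ i) * φ k with hC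
  have hBconj : ∀ m n, (starRingEnd ℂ) (B m n)
      = ∑ i : Fin N, ∑ j : Fin N, g i j m n * (starRingEnd ℂ) (φ i) * (starRingEnd ℂ) (φ j) := by
    intro m n
    simp only [hB, map_sum, map_mul, h3]
  have hCconj : ∀ m n, (starRingEnd ℂ) (C m n)
      = ∑ j : Fin N, ∑ l : Fin N, g j n l m * (starRingEnd ℂ) (φ j) * φ l := by
    intro m n
    simp only [hC, map_sum, map_mul, h3, Complex.conj_conj]
    rw [Finset.sum_comm]
    exact Finset.sum_congr rfl fun j _ => Finset.sum_congr rfl fun l _ => by ring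
  have hexp : ∀ (P Q : Fin N → Fin N → ℂ),
      (∑ i : Fin N, ∑ j : Fin N, P i j) * (∑ k : Fin N, ∑ l : Fin N, Q k l)
        = ∑ i : Fin N, ∑ j : Fin N, ∑ k : Fin N, ∑ l : Fin N, P i j * Q k l := by
    intro P Q
    rw [Finset.sum_mul]
    refine Finset.sum_congr rfl fun i _ => ?_
    rw [Finset.sum_mul]
    refine Finset.sum_congr rfl fun j _ => ?_
    rw [Finset.mul_sum]
    exact Finset.sum_congr rfl fun k _ => by rw [Finset.mul_sum]
  have hgsub : ∀ i j k l : Fin N, g i j k l =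
      ((cflat g g i j k l + 4 * csharp g g i j k l)
        + (cflat g g j i k l + 4 * csharp g g j i k l)
        + (cflat g g i j l k + 4 * csharp g g i j l k)
        + (cflat g g j i l k + 4 * csharp g g j i l k)) / 4 := by
    intro i j k l; rw [hfix i j k l]; simp only [cP]
  have flat_eq : (∑ i : Fin N, ∑ j : Fin N, ∑ k : Fin N, ∑ l : Fin N,
        cflat g g i j k l * (starRingEnd ℂ) (φ i) * (starRingEnd ℂ) (φ j) * φ k * φ l)
      = ∑ m : Fin N, ∑ n : Fin N, (starRingEnd ℂ) (B m n) * B m n := by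
    calc (∑ i : Fin N, ∑ j : Fin N, ∑ k : Fin N, ∑ l : Fin N,
          cflat g g i j k l * (starRingEnd ℂ) (φ i) * (starRingEnd ℂ) (φ j) * φ k * φ l)
        = ∑ i : Fin N, ∑ j : Fin N, ∑ k : Fin N, ∑ l : Fin N, ∑ m : Fin N, ∑ n : Fin N,
            g i j m n * g m n k l * (starRingEnd ℂ) (φ i) * (starRingEnd ℂ) (φ j) * φ k * φ l := by
          simp only [cflat, Finset.sum_mul]
      _ = ∑ m : Fin N, ∑ n : Fin N, ∑ i : Fin N, ∑ j : Fin N, ∑ k : Fin N, ∑ l : Fin N,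
            g i j m n * g m n k l * (starRingEnd ℂ) (φ i) * (starRingEnd ℂ) (φ j) * φ k * φ l :=
          sum6_comm _
      _ = ∑ m : Fin N, ∑ n : Fin N, (starRingEnd ℂ) (B m n) * B m n := by
          refine Finset.sum_congr rfl fun m _ => Finset.sum_congr rfl fun n _ => ?_
          rw [hBconj m n]
          simp only [hB]
          rw [hexp]
          exact Finset.sum_congr rfl fun i _ => Finset.sum_congr rfl fun j _ =>
            Finset.sum_congr rfl fun k _ => Finset.sum_congr rfl fun l _ => by ring
  have sharp_eq : (∑ i : Fin N, ∑ j : Fin N, ∑ k : Fin N, ∑ l : Fin N,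
        csharp g g i j k l * (starRingEnd ℂ) (φ i) * (starRingEnd ℂ) (φ j) * φ k * φ l)
      = ∑ m : Fin N, ∑ n : Fin N, (starRingEnd ℂ) (C m n) * C m n := by
    calc (∑ i : Fin N, ∑ j : Fin N, ∑ k : Fin N, ∑ l : Fin N,
          csharp g g i j k l * (starRingEnd ℂ) (φ i) * (starRingEnd ℂ) (φ j) * φ k * φ l)
        = ∑ i : Fin N, ∑ j : Fin N, ∑ k : Fin N, ∑ l : Fin N, ∑ m : Fin N, ∑ n : Fin N,
            g i m k n * g j n l m * (starRingEnd ℂ) (φ i) * (starRingEnd ℂ) (φ j) * φ k * φ l := by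
          simp only [csharp, Finset.sum_mul]
      _ = ∑ m : Fin N, ∑ n : Fin N, ∑ i : Fin N, ∑ j : Fin N, ∑ k : Fin N, ∑ l : Fin N,
            g i m k n * g j n l m * (starRingEnd ℂ) (φ i) * (starRingEnd ℂ) (φ j) * φ k * φ l :=
          sum6_comm _
      _ = ∑ m : Fin N, ∑ n : Fin N, ∑ j : Fin N, ∑ l : Fin N, ∑ i : Fin N, ∑ k : Fin N,
            g i m k n * g j n l m * (starRingEnd ℂ) (φ i) * (starRingEnd ℂ) (φ j) * φ k * φ l :=
          Finset.sum_congr rfl fun m _ => Finset.sum_congr rfl fun n _ => sum4_perm _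
      _ = ∑ m : Fin N, ∑ n : Fin N, (starRingEnd ℂ) (C m n) * C m n := by
          refine Finset.sum_congr rfl fun m _ => Finset.sum_congr rfl fun n _ => ?_
          rw [hCconj m n]
          simp only [hC]
          rw [hexp]
          exact Finset.sum_congr rfl fun j _ => Finset.sum_congr rfl fun l _ =>
            Finset.sum_congr rfl fun i _ => Finset.sum_congr rfl fun k _ => by ring
  have key : (∑ i : Fin N, ∑ j : Fin N, ∑ k : Fin N, ∑ l : Fin N,
        g i j k l * (starRingEnd ℂ) (φ i) * (starRingEnd ℂ) (φ j) * φ k * φ l)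
      = ((∑ m : Fin N, ∑ n : Fin N,
          (Complex.normSq (B m n) + 4 * Complex.normSq (C m n)) : ℝ) : ℂ) := by
    calc (∑ i : Fin N, ∑ j : Fin N, ∑ k : Fin N, ∑ l : Fin N,
          g i j k l * (starRingEnd ℂ) (φ i) * (starRingEnd ℂ) (φ j) * φ k * φ l)
        = ∑ i : Fin N, ∑ j : Fin N, ∑ k : Fin N, ∑ l : Fin N,
            ((cflat g g i j k l + 4 * csharp g g i j k l)
              + (cflat g g j i k l + 4 * csharp g g j i k l)
              + (cflat g g i j l k + 4 * csharp g g i j l k)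
              + (cflat g g j i l k + 4 * csharp g g j i l k)) / 4
              * (starRingEnd ℂ) (φ i) * (starRingEnd ℂ) (φ j) * φ k * φ l :=
          Finset.sum_congr rfl fun i _ => Finset.sum_congr rfl fun j _ =>
            Finset.sum_congr rfl fun k _ => Finset.sum_congr rfl fun l _ => by
              rw [hgsub i j k l]
      _ = ((∑ i : Fin N, ∑ j : Fin N, ∑ k : Fin N, ∑ l : Fin N,
              (cflat g g i j k l + 4 * csharp g g i j k l)
                * (starRingEnd ℂ) (φ i) * (starRingEnd ℂ) (φ j) * φ k * φ l)
            + (∑ i : Fin N, ∑ j : Fin N, ∑ k : Fin N, ∑ l : Fin N,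
              (cflat g g j i k l + 4 * csharp g g j i k l)
                * (starRingEnd ℂ) (φ i) * (starRingEnd ℂ) (φ j) * φ k * φ l)
            + (∑ i : Fin N, ∑ j : Fin N, ∑ k : Fin N, ∑ l : Fin N,
              (cflat g g i j l k + 4 * csharp g g i j l k)
                * (starRingEnd ℂ) (φ i) * (starRingEnd ℂ) (φ j) * φ k * φ l)
            + (∑ i : Fin N, ∑ j : Fin N, ∑ k : Fin N, ∑ l : Fin N,
              (cflat g g j i l k + 4 * csharp g g j i l k)
                * (starRingEnd ℂ) (φ i) * (starRingEnd ℂ) (φ j) * φ k * φ l)) / 4 := by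
          rw [eq_div_iff (by norm_num : (4:ℂ) ≠ 0)]
          simp only [Finset.sum_mul, ← Finset.sum_add_distrib]
          exact Finset.sum_congr rfl fun i _ => Finset.sum_congr rfl fun j _ =>
            Finset.sum_congr rfl fun k _ => Finset.sum_congr rfl fun l _ => by ring
      _ = ∑ i : Fin N, ∑ j : Fin N, ∑ k : Fin N, ∑ l : Fin N,
            (cflat g g i j k l + 4 * csharp g g i j k l)
              * (starRingEnd ℂ) (φ i) * (starRingEnd ℂ) (φ j) * φ k * φ l := by
          have e2 : (∑ i : Fin N, ∑ j : Fin N, ∑ k : Fin N, ∑ l : Fin N,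
                (cflat g g j i k l + 4 * csharp g g j i k l)
                  * (starRingEnd ℂ) (φ i) * (starRingEnd ℂ) (φ j) * φ k * φ l)
              = ∑ i : Fin N, ∑ j : Fin N, ∑ k : Fin N, ∑ l : Fin N,
                (cflat g g i j k l + 4 * csharp g g i j k l)
                  * (starRingEnd ℂ) (φ i) * (starRingEnd ℂ) (φ j) * φ k * φ l := by
            rw [Finset.sum_comm]
            exact Finset.sum_congr rfl fun i _ => Finset.sum_congr rfl fun j _ =>
              Finset.sum_congr rfl fun k _ => Finset.sum_congr rfl fun l _ => by ring
          have e3 : (∑ i : Fin N, ∑ j : Fin N, ∑ k : Fin N, ∑ l : Fin N,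
                (cflat g g i j l k + 4 * csharp g g i j l k)
                  * (starRingEnd ℂ) (φ i) * (starRingEnd ℂ) (φ j) * φ k * φ l)
              = ∑ i : Fin N, ∑ j : Fin N, ∑ k : Fin N, ∑ l : Fin N,
                (cflat g g i j k l + 4 * csharp g g i j k l)
                  * (starRingEnd ℂ) (φ i) * (starRingEnd ℂ) (φ j) * φ k * φ l := by
            refine Finset.sum_congr rfl fun i _ => Finset.sum_congr rfl fun j _ => ?_
            rw [Finset.sum_comm]
            exact Finset.sum_congr rfl fun k _ => Finset.sum_congr rfl fun l _ => by ring
          have e4 : (∑ i : Fin N, ∑ j : Fin N, ∑ k : Fin N, ∑ l : Fin N,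
                (cflat g g j i l k + 4 * csharp g g j i l k)
                  * (starRingEnd ℂ) (φ i) * (starRingEnd ℂ) (φ j) * φ k * φ l)
              = ∑ i : Fin N, ∑ j : Fin N, ∑ k : Fin N, ∑ l : Fin N,
                (cflat g g i j k l + 4 * csharp g g i j k l)
                  * (starRingEnd ℂ) (φ i) * (starRingEnd ℂ) (φ j) * φ k * φ l := by
            rw [Finset.sum_comm]
            refine Finset.sum_congr rfl fun i _ => Finset.sum_congr rfl fun j _ => ?_
            rw [Finset.sum_comm]
            exact Finset.sum_congr rfl fun k _ => Finset.sum_congr rfl fun l _ => by ring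
          rw [e2, e3, e4]; ring
      _ = (∑ i : Fin N, ∑ j : Fin N, ∑ k : Fin N, ∑ l : Fin N,
              cflat g g i j k l * (starRingEnd ℂ) (φ i) * (starRingEnd ℂ) (φ j) * φ k * φ l)
            + 4 * ∑ i : Fin N, ∑ j : Fin N, ∑ k : Fin N, ∑ l : Fin N,
              csharp g g i j k l * (starRingEnd ℂ) (φ i) * (starRingEnd ℂ) (φ j) * φ k * φ l := by
          simp only [Finset.mul_sum, ← Finset.sum_add_distrib]
          exact Finset.sum_congr rfl fun i _ => Finset.sum_congr rfl fun j _ =>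
            Finset.sum_congr rfl fun k _ => Finset.sum_congr rfl fun l _ => by ring
      _ = (∑ m : Fin N, ∑ n : Fin N, (starRingEnd ℂ) (B m n) * B m n)
            + 4 * ∑ m : Fin N, ∑ n : Fin N, (starRingEnd ℂ) (C m n) * C m n := by
          rw [flat_eq, sharp_eq]
      _ = ((∑ m : Fin N, ∑ n : Fin N,
            (Complex.normSq (B m n) + 4 * Complex.normSq (C m n)) : ℝ) : ℂ) := by
          push_cast
          simp only [Finset.mul_sum, ← Finset.sum_add_distrib]
          exact Finset.sum_congr rfl fun m _ => Finset.sum_congr rfl fun n _ => by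
            rw [conj_mul_self, conj_mul_self]
  rw [key]
  refine ⟨Complex.ofReal_im _, ?_⟩
  rw [Complex.ofReal_re]
  refine Finset.sum_nonneg fun m _ => Finset.sum_nonneg fun n _ => ?_
  have := Complex.normSq_nonneg (B m n)
  have := Complex.normSq_nonneg (C m n)
  positivity
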